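/- Along any solution of the complex two-peakon dynamical system, the moduli A₁² := p₁² + r₁² and A₂² := p₂² + r₂² are conserved: d/dt(p_j² + r_j²) = 0 for j = 1, 2. -/

import Mathlib

/-- Along any solution of the complex two-peakon dynamical system, the squared moduli
`p_j² + r_j²` (`j = 1, 2`) are conserved. -/
theorem complex_two_peakon_moduli_conserved (p r q : Fin 2 → ℝ → ℝ)
    (hp : ∀ (j : Fin 2) (t : ℝ), HasDerivAt (p j)
      (r j t * ∑ l : Fin 2, ∑ k : Fin 2, p l t * r k t *
        (Real.sign (q j t - q k t) - Real.sign (q j t - q l t)) *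
        Real.exp (-|q j t - q k t| - |q j t - q l t|)) t)
    (hr : ∀ (j : Fin 2) (t : ℝ), HasDerivAt (r j)
      (p j t * ∑ l : Fin 2, ∑ k : Fin 2, p l t * r k t *
        (Real.sign (q j t - q l t) - Real.sign (q j t - q k t)) *
        Real.exp (-|q j t - q k t| - |q j t - q l t|)) t)
    (hq : ∀ (j : Fin 2) (t : ℝ), HasDerivAt (q j)
      ((1 / 6) * ((p j t) ^ 2 + (r j t) ^ 2)
        - (1 / 2) * ∑ l : Fin 2, ∑ k : Fin 2, (p l t * p k t + r l t * r k t) *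
          (1 - Real.sign (q j t - q l t) * Real.sign (q j t - q k t)) *
          Real.exp (-|q j t - q l t| - |q j t - q k t|)) t) :
    ∀ (j : Fin 2) (t : ℝ), HasDerivAt (fun s => (p j s) ^ 2 + (r j s) ^ 2) 0 t := by
  intro j t
  have h := ((hp j t).fun_pow 2).fun_add ((hr j t).fun_pow 2)
  refine h.congr_deriv ?_
  simp only [Fin.sum_univ_two]
  ring
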